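/- Let C ⊆ F^m be a 1-code with 0 ∈ C and let Ċ := C \ {0}. Then the cosets R_ι + ẑι + e^(ι), for ι ∈ Ċ, are pairwise disjoint subsets of the Hamming code H, and none of them contains the all-zero word 0^n. -/

import Mathlib

/-- `F^m`: binary words of length `m`, i.e. the vector space `(Fin m → ZMod 2)` over GF(2). -/
abbrev Fm (m : ℕ) := Fin m → ZMod 2

/-- Index set for `F^n` with `n = 2^m - 1`: the nonzero vectors of `F^m`. -/
abbrev Idx (m : ℕ) := {v : Fm m // v ≠ 0}

/-- `F^n`: binary words of length `n = 2^m - 1`, with coordinates indexed by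
nonzero vectors of `F^m`. -/
abbrev Fn (m : ℕ) := Idx m → ZMod 2

/-- The coordinate of `c : F^n` at index `α : F^m` (junk value `0` when `α = 0`,
which is never used since coordinates are only ever accessed at nonzero indices). -/
def coord {m : ℕ} (c : Fn m) (α : Fm m) : ZMod 2 :=
  if h : α = 0 then 0 else c ⟨α, h⟩

/-- `e^(ι)`: the word of `F^n` with `1` in coordinate `ι` and `0` elsewhere. -/
def eWord {m : ℕ} (ι : Idx m) : Fn m := fun κ => if κ = ι then 1 else 0

/-- `ẑα = (α, 0^{n-m})`: the word of `F^n` whose coordinate at index `κ` equals `α i`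
if `κ = π^(i)` is the `i`-th standard basis vector `Pi.single i 1`, and `0` otherwise. -/
def zhat {m : ℕ} (α : Fm m) : Fn m :=
  fun κ => ∑ i : Fin m, if (κ : Fm m) = Pi.single i 1 then α i else 0

/-- The Hamming code `H = {c ∈ F^n : ∑_{ι ≠ 0} c_ι • ι = 0}`. -/
def hammingCode (m : ℕ) : Set (Fn m) :=
  {c | ∑ ι : Idx m, c ι • (ι : Fm m) = 0}

/-- The linear `ι`-component `R_ι = {c ∈ H : c_α = c_{α+ι} ∀ α ∉ {0, ι}}`. -/
def Rcomp {m : ℕ} (ι : Idx m) : Set (Fn m) :=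
  {c | c ∈ hammingCode m ∧
    ∀ α : Fm m, α ≠ 0 → α ≠ (ι : Fm m) → coord c α = coord c (α + ι)}

/-- The coset `M + z = {c + z : c ∈ M}`. -/
def coset {m : ℕ} (M : Set (Fn m)) (z : Fn m) : Set (Fn m) := (fun c => c + z) '' M

/-- The neighborhood `Ω(M)` of `M ⊆ F^n`: all words at Hamming distance at most 1 from `M`. -/
def nbhd {m : ℕ} (M : Set (Fn m)) : Set (Fn m) :=
  {x | ∃ c ∈ M, hammingDist x c ≤ 1}

/-- A `1`-code: any two distinct elements are at Hamming distance at least 3. -/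
def IsOneCode {ι : Type*} [Fintype ι] (C : Set (ι → ZMod 2)) : Prop :=
  ∀ x ∈ C, ∀ y ∈ C, x ≠ y → 3 ≤ hammingDist x y

/-- A `1`-perfect code in `F^n`: a `1`-code whose radius-1 balls cover all of `F^n`. -/
def IsOnePerfect {m : ℕ} (P : Set (Fn m)) : Prop :=
  IsOneCode P ∧ ∀ x : Fn m, ∃ c ∈ P, hammingDist x c ≤ 1

/-- In characteristic 2, the sum of two distinct vectors is nonzero. -/
lemma add_ne_zero_of_ne' {m : ℕ} {ι κ : Fm m} (h : ι ≠ κ) : ι + κ ≠ 0 := by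
  intro h0
  apply h
  funext i
  have h1 := congrFun h0 i
  have key : ∀ a b : ZMod 2, a + b = 0 → a = b := by decide
  exact key _ _ h1


section Stmt11Helpers

lemma z2_eq_of_add_eq_zero {a b : ZMod 2} (h : a + b = 0) : a = b := by
  revert h; revert a b; decide

lemma z2_add_self (a : ZMod 2) : a + a = 0 := by revert a; decide

lemma single_ne_zero' {m : ℕ} (i : Fin m) : (Pi.single i 1 : Fm m) ≠ 0 := by
  intro h
  have := congrFun h i
  simp at this

lemma add_self_add {m : ℕ} (a b : Fm m) : a + (a + b) = b := by
  funext k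
  exact (by decide : ∀ p q : ZMod 2, p + (p + q) = q) _ _

lemma norm_le_two {m : ℕ} (i j : Fin m) (x : Fm m) (hx : ∀ k, k ≠ i → k ≠ j → x k = 0) :
    hammingNorm x ≤ 2 := by
  have h1 : (Finset.univ.filter fun k => x k ≠ 0) ⊆ {i, j} := by
    intro k hk
    rw [Finset.mem_filter] at hk
    by_contra hk2
    simp only [Finset.mem_insert, Finset.mem_singleton, not_or] at hk2
    exact hk.2 (hx k hk2.1 hk2.2)
  calc hammingNorm x ≤ ({i, j} : Finset (Fin m)).card := Finset.card_le_card h1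
    _ ≤ ({j} : Finset (Fin m)).card + 1 := Finset.card_insert_le i {j}
    _ = 2 := by simp

lemma ne_single_add_single {m : ℕ} {v : Fm m} (hv : 3 ≤ hammingNorm v) (i j : Fin m) :
    v ≠ Pi.single i 1 + Pi.single j 1 := by
  intro h
  subst h
  have := norm_le_two i j (Pi.single i 1 + Pi.single j 1)
    (fun k hki hkj => by simp [Pi.single_apply, hki, hkj])
  omega

lemma ne_single' {m : ℕ} {v : Fm m} (hv : 3 ≤ hammingNorm v) (i : Fin m) :
    v ≠ Pi.single i 1 := by
  intro h
  subst h
  have := norm_le_two i i (Pi.single i 1) (fun k hki _ => by simp [Pi.single_apply, hki])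
  omega

lemma coord_add {m : ℕ} (x y : Fn m) (β : Fm m) :
    coord (x + y) β = coord x β + coord y β := by
  unfold coord
  split <;> simp [Pi.add_apply]

lemma coord_eWord {m : ℕ} (ι : Idx m) (β : Fm m) :
    coord (eWord ι) β = if β = (ι : Fm m) then 1 else 0 := by
  unfold coord eWord
  split
  · next h =>
    subst h
    rw [if_neg (fun hh => ι.2 hh.symm)]
  · simp [Subtype.ext_iff]

lemma coord_zhat {m : ℕ} (α β : Fm m) :
    coord (zhat α) β = ∑ i : Fin m, if β = Pi.single i 1 then α i else 0 := by
  unfold coord zhat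
  split
  · next h =>
    subst h
    symm
    apply Finset.sum_eq_zero
    intro i _
    rw [if_neg (fun hh => single_ne_zero' i hh.symm)]
  · rfl

lemma coord_zhat_single {m : ℕ} (α : Fm m) (j : Fin m) :
    coord (zhat α) (Pi.single j 1) = α j := by
  rw [coord_zhat]
  have h : ∀ i : Fin m, ((Pi.single j 1 : Fm m) = Pi.single i 1) = (j = i) := by
    intro i
    apply propext
    constructor
    · intro h
      by_contra hne
      have := congrFun h j
      simp [Pi.single_apply, hne] at this
    · intro h; subst h; rfl
  simp_rw [h]
  simp

lemma coord_zhat_of_ne {m : ℕ} (α β : Fm m) (h : ∀ i, β ≠ Pi.single i 1) :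
    coord (zhat α) β = 0 := by
  rw [coord_zhat]
  exact Finset.sum_eq_zero fun i _ => if_neg (h i)

lemma syndrome_eWord {m : ℕ} (ι : Idx m) :
    ∑ κ : Idx m, eWord ι κ • (κ : Fm m) = (ι : Fm m) := by
  unfold eWord
  rw [Finset.sum_eq_single ι]
  · simp
  · intro b _ hb
    simp [hb]
  · simp

lemma syndrome_zhat {m : ℕ} (α : Fm m) :
    ∑ κ : Idx m, zhat α κ • (κ : Fm m) = α := by
  unfold zhat
  simp_rw [Finset.sum_smul]
  rw [Finset.sum_comm]
  have h : ∀ i : Fin m, ∑ κ : Idx m, (if (κ : Fm m) = Pi.single i 1 then α i else 0) • (κ : Fm m)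
      = α i • (Pi.single i 1 : Fm m) := by
    intro i
    rw [Finset.sum_eq_single (⟨Pi.single i 1, single_ne_zero' i⟩ : Idx m)]
    · simp
    · intro b _ hb
      rw [if_neg (fun hh => hb (Subtype.ext hh)), zero_smul]
    · simp
  simp_rw [h]
  funext j
  simp [Finset.sum_apply, Pi.single_apply, Finset.sum_ite_eq]

lemma add_self_fm {m : ℕ} (v : Fm m) : v + v = 0 := funext fun _ => z2_add_self _

lemma shift_eq {m : ℕ} {a b c : Fm m} (h : a + b = c) : a = c + b := by
  funext k
  exact (by decide : ∀ p q r : ZMod 2, p + q = r → p = r + q) _ _ _ (congrFun h k)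

lemma eq_of_add_eq_zero' {m : ℕ} {a b : Fm m} (h : a + b = 0) : a = b :=
  funext fun k => z2_eq_of_add_eq_zero (congrFun h k)

lemma coord_zhat_single_add {m : ℕ} (α : Fm m) (j : Fin m) {w : Fm m}
    (hw : 3 ≤ hammingNorm w) : coord (zhat α) (Pi.single j 1 + w) = 0 := by
  apply coord_zhat_of_ne
  intro i h
  have hw' : w = Pi.single j 1 + Pi.single i 1 := by
    conv_lhs => rw [← add_self_add (Pi.single j 1) w]
    rw [h]
  exact ne_single_add_single hw j i hw'

lemma pair_eq {m : ℕ} {ι : Idx m} {c : Fn m} (hc : c ∈ Rcomp ι) (z : Fn m)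
    {β : Fm m} (hβ0 : β ≠ 0) (hβι : β ≠ (ι : Fm m)) :
    coord (c + z) β + coord (c + z) (β + ι) = coord z β + coord z (β + ι) := by
  rw [coord_add, coord_add, hc.2 β hβ0 hβι]
  exact (by decide : ∀ a s t : ZMod 2, (a + s) + (a + t) = s + t) _ _ _

end Stmt11Helpers

/-- If `C ⊆ F^m` is a 1-code with `0 ∈ C`, then the cosets
`R_ι + ẑι + e^(ι)`, for `ι ∈ Ċ = C \ {0}`, are pairwise disjoint subsets of `H`,
and none of them contains `0^n`. -/
theorem stmt11 (m : ℕ) (hm : 1 ≤ m) (C : Set (Fm m)) (hC : IsOneCode C)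
    (h0 : (0 : Fm m) ∈ C) :
    (∀ ι κ : Idx m, (ι : Fm m) ∈ C → (κ : Fm m) ∈ C → ι ≠ κ →
        Disjoint (coset (Rcomp ι) (zhat (ι : Fm m) + eWord ι))
          (coset (Rcomp κ) (zhat (κ : Fm m) + eWord κ))) ∧
      (∀ ι : Idx m, (ι : Fm m) ∈ C →
        coset (Rcomp ι) (zhat (ι : Fm m) + eWord ι) ⊆ hammingCode m) ∧
      (∀ ι : Idx m, (ι : Fm m) ∈ C →
        (0 : Fn m) ∉ coset (Rcomp ι) (zhat (ι : Fm m) + eWord ι)) := by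
  have hwt : ∀ v : Fm m, v ∈ C → v ≠ 0 → 3 ≤ hammingNorm v := by
    intro v hv hv0
    have h3 := hC 0 h0 v hv (fun h => hv0 h.symm)
    rwa [hammingDist_zero_left] at h3
  refine ⟨?_, ?_, ?_⟩
  · -- disjointness
    intro ι κ hι hκ hne
    rw [Set.disjoint_left]
    rintro x ⟨c, hc, rfl⟩ ⟨c', hc', hx⟩
    have hwι := hwt ι.val hι ι.2
    have hwκ := hwt κ.val hκ κ.2
    have hιvκ : (ι : Fm m) ≠ κ := fun h => hne (Subtype.ext h)
    have hwικ : 3 ≤ hammingNorm ((ι : Fm m) + (κ : Fm m)) := by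
      have h3 := hC ι.val hι κ.val hκ hιvκ
      rw [hammingDist_eq_hammingNorm] at h3
      have hsub : -(ι : Fm m) + κ = (ι : Fm m) + (κ : Fm m) := by
        funext k
        exact (by decide : ∀ a b : ZMod 2, -a + b = a + b) _ _
      rwa [hsub] at h3
    have hwκι : 3 ≤ hammingNorm ((κ : Fm m) + (ι : Fm m)) := by rwa [add_comm]
    obtain ⟨j, hj⟩ : ∃ j, ((ι : Fm m) + (κ : Fm m)) j ≠ 0 := by
      by_contra hno
      push_neg at hno
      exact add_ne_zero_of_ne' hιvκ (funext hno)
    have hA0 : (Pi.single j 1 : Fm m) ≠ 0 := single_ne_zero' j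
    have hAι : (Pi.single j 1 : Fm m) ≠ (ι : Fm m) := fun h => ne_single' hwι j h.symm
    have hAκ : (Pi.single j 1 : Fm m) ≠ (κ : Fm m) := fun h => ne_single' hwκ j h.symm
    have hAικ : (Pi.single j 1 : Fm m) ≠ (ι : Fm m) + (κ : Fm m) :=
      fun h => ne_single' hwικ j h.symm
    have hAκι2 : (Pi.single j 1 : Fm m) ≠ (κ : Fm m) + (ι : Fm m) := by
      rw [add_comm]; exact hAικ
    set zι : Fn m := zhat (ι : Fm m) + eWord ι with hzι
    set zκ : Fn m := zhat (κ : Fm m) + eWord κ with hzκ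
    have hAκ0 : (Pi.single j 1 : Fm m) + (κ : Fm m) ≠ 0 :=
      fun h => hAκ (eq_of_add_eq_zero' h)
    have hAκneι : (Pi.single j 1 : Fm m) + (κ : Fm m) ≠ (ι : Fm m) :=
      fun h => hAικ (shift_eq h)
    have hAι0 : (Pi.single j 1 : Fm m) + (ι : Fm m) ≠ 0 :=
      fun h => hAι (eq_of_add_eq_zero' h)
    have hAιneκ : (Pi.single j 1 : Fm m) + (ι : Fm m) ≠ (κ : Fm m) :=
      fun h => hAκι2 (shift_eq h)
    have E1 := pair_eq hc zι hA0 hAι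
    have E2 := pair_eq hc zι hAκ0 hAκneι
    have E3 := pair_eq hc' zκ hA0 hAκ
    have E4 := pair_eq hc' zκ hAι0 hAιneκ
    have hx2 : c' + zκ = c + zι := hx
    rw [hx2] at E3 E4
    have hDD : (Pi.single j 1 : Fm m) + (ι : Fm m) + (κ : Fm m)
        = (Pi.single j 1 : Fm m) + (κ : Fm m) + (ι : Fm m) := by
      rw [add_assoc, add_assoc, add_comm (ι : Fm m)]
    rw [hDD] at E4
    have hz1 : coord zι (Pi.single j 1) + coord zι (Pi.single j 1 + (ι : Fm m))
        = (ι : Fm m) j := by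
      rw [hzι, coord_add, coord_add, coord_zhat_single, coord_zhat_single_add _ _ hwι,
        coord_eWord, coord_eWord, if_neg hAι, if_neg ?hneg]
      case hneg =>
        intro h
        exact hA0 (by rw [shift_eq h, add_self_fm])
      exact (by decide : ∀ a : ZMod 2, a + 0 + (0 + 0) = a) _
    have hz2 : coord zι (Pi.single j 1 + (κ : Fm m))
        + coord zι (Pi.single j 1 + (κ : Fm m) + (ι : Fm m)) = 0 := by
      have hrw : (Pi.single j 1 : Fm m) + (κ : Fm m) + (ι : Fm m)
          = (Pi.single j 1 : Fm m) + ((κ : Fm m) + (ι : Fm m)) := by rw [add_assoc]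
      rw [hzι, coord_add, coord_add, coord_zhat_single_add _ _ hwκ, hrw,
        coord_zhat_single_add _ _ hwκι, coord_eWord, coord_eWord,
        if_neg hAκneι, if_neg ?hneg]
      case hneg =>
        intro h
        have h2 : (Pi.single j 1 : Fm m) = (ι : Fm m) + ((κ : Fm m) + (ι : Fm m)) :=
          shift_eq h
        rw [add_comm (κ : Fm m), add_self_add] at h2
        exact hAκ h2
      decide
    have hz3 : coord zκ (Pi.single j 1) + coord zκ (Pi.single j 1 + (κ : Fm m))
        = (κ : Fm m) j := by
      rw [hzκ, coord_add, coord_add, coord_zhat_single, coord_zhat_single_add _ _ hwκ,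
        coord_eWord, coord_eWord, if_neg hAκ, if_neg ?hneg]
      case hneg =>
        intro h
        exact hA0 (by rw [shift_eq h, add_self_fm])
      exact (by decide : ∀ a : ZMod 2, a + 0 + (0 + 0) = a) _
    have hz4 : coord zκ (Pi.single j 1 + (ι : Fm m))
        + coord zκ (Pi.single j 1 + (κ : Fm m) + (ι : Fm m)) = 0 := by
      have hrw : (Pi.single j 1 : Fm m) + (κ : Fm m) + (ι : Fm m)
          = (Pi.single j 1 : Fm m) + ((ι : Fm m) + (κ : Fm m)) := by
        rw [add_assoc, add_comm (κ : Fm m)]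
      rw [hzκ, coord_add, coord_add, coord_zhat_single_add _ _ hwι, hrw,
        coord_zhat_single_add _ _ hwικ, coord_eWord, coord_eWord,
        if_neg hAιneκ, if_neg ?hneg]
      case hneg =>
        intro h
        have h2 : (Pi.single j 1 : Fm m) = (κ : Fm m) + ((ι : Fm m) + (κ : Fm m)) :=
          shift_eq h
        rw [add_comm (ι : Fm m), add_self_add] at h2
        exact hAι h2
      decide
    rw [hz1] at E1
    rw [hz2] at E2
    rw [hz3] at E3
    rw [hz4] at E4
    have key : ∀ xA xB xC xD p q : ZMod 2,
        xA + xB = p → xC + xD = 0 → xA + xC = q → xB + xD = 0 → p + q = 0 := by decide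
    exact hj (key _ _ _ _ _ _ E1 E2 E3 E4)
  · -- subset of Hamming code
    rintro ι hι x ⟨c, hc, rfl⟩
    have h1 : ∑ κ : Idx m, c κ • (κ : Fm m) = 0 := hc.1
    show ∑ κ : Idx m, (c + (zhat (ι : Fm m) + eWord ι)) κ • (κ : Fm m) = 0
    simp_rw [Pi.add_apply, add_smul, Finset.sum_add_distrib, h1, syndrome_zhat, syndrome_eWord]
    funext k
    simp [z2_add_self]
  · -- 0 not in the coset
    rintro ι hι ⟨c, hc, hzero⟩
    have hcz : c = zhat (ι : Fm m) + eWord ι :=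
      funext fun k => z2_eq_of_add_eq_zero (congrFun hzero k)
    rw [hcz] at hc
    have hwι := hwt ι.val hι ι.2
    obtain ⟨j, hj⟩ : ∃ j, (ι : Fm m) j ≠ 0 := by
      by_contra hno
      push_neg at hno
      exact ι.2 (funext hno)
    have hA0 : (Pi.single j 1 : Fm m) ≠ 0 := single_ne_zero' j
    have hAι : (Pi.single j 1 : Fm m) ≠ (ι : Fm m) := fun h => ne_single' hwι j h.symm
    have heq := hc.2 (Pi.single j 1) hA0 hAι
    rw [coord_add, coord_add, coord_zhat_single, coord_zhat_single_add _ _ hwι,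
      coord_eWord, coord_eWord, if_neg hAι, if_neg (fun h : (Pi.single j 1 : Fm m) + ι = ι => by
        have h0 : (Pi.single j 1 : Fm m) = 0 := by rw [shift_eq h, add_self_fm]
        exact hA0 h0)] at heq
    apply hj
    have : (ι : Fm m) j + 0 = 0 + 0 := heq
    simpa using this
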